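/- A function φ : [1]^m → [1]^n is an interval-preserving meet-semilattice homomorphism if and only if, up to the factorization through its image, each component of the surjective part is a meet of a nonempty subset of coordinates. Concretely for n = 1: a surjective function φ : [1]^m → [1] preserving binary meets and intervals is of the form φ(x) = ⋀_{i ∈ I} x_i for some nonempty subset I ⊆ {1,...,m}. -/
import Mathlib


/-- A function between preorders is interval-preserving if the image of every
(nonempty) interval is an interval. -/
def IsIntervalPreserving {α β : Type*} [Preorder α] [Preorder β] (f : α → β) : Prop :=
  ∀ p q : α, p ≤ q → ∃ a b : β, f '' Set.Icc p q = Set.Icc a b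

lemma bool_finset_inf_eq_false {α : Type*} [DecidableEq α] (S : Finset α) (f : α → Bool) :
    S.inf f = false ↔ ∃ i ∈ S, f i = false := by
  induction S using Finset.induction with
  | empty => simp
  | insert h ih =>
    simp only [Finset.inf_insert, Finset.mem_insert]
    cases hf : f _ <;> simp_all [Bool.inf_eq_band]

lemma map_nonempty_inf {m : ℕ} (φ : (Fin m → Bool) → Bool)
    (hmeet : ∀ x y, φ (x ⊓ y) = φ x ⊓ φ y) (S : Finset (Fin m)) (hS : S.Nonempty)
    (e : Fin m → (Fin m → Bool)) : φ (S.inf e) = S.inf (φ ∘ e) := by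
  induction hS using Finset.Nonempty.cons_induction with
  | singleton a => simp
  | cons a S ha hS ih => simp [Finset.inf_cons, hmeet, ih]

/-- A surjective function `φ : [1]^m → [1]` preserving binary meets and
intervals is of the form `φ x = ⋀_{i ∈ I} x i` for some nonempty `I ⊆ {1,…,m}`. -/
theorem stmt_12 {m : ℕ} (φ : (Fin m → Bool) → Bool) (hs : Function.Surjective φ)
    (hmeet : ∀ x y, φ (x ⊓ y) = φ x ⊓ φ y) (hip : IsIntervalPreserving φ) :
    ∃ I : Finset (Fin m), I.Nonempty ∧ ∀ x, φ x = I.inf x := by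
  classical
  have hmono : Monotone φ := by
    intro x y hxy
    have hx : x ⊓ y = x := inf_eq_left.2 hxy
    have := hmeet x y
    rw [hx] at this
    exact le_of_eq_of_le this inf_le_right
  set e : Fin m → (Fin m → Bool) := fun i j => decide (j ≠ i) with he
  set I : Finset (Fin m) := Finset.univ.filter (fun i => φ (e i) = false) with hI
  -- decomposition of any x as inf of e i over false coordinates
  have hdecomp : ∀ x : Fin m → Bool,
      x = (Finset.univ.filter (fun j => x j = false)).inf e := by
    intro x
    funext j
    rw [Finset.inf_apply]
    cases hx : x j with
    | false =>
      symm
      rw [bool_finset_inf_eq_false]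
      exact ⟨j, by simp [hx], by simp [he]⟩
    | true =>
      cases hinf : (Finset.univ.filter (fun j => x j = false)).inf (fun a => e a j) with
      | true => rfl
      | false =>
        obtain ⟨i, hi, hei⟩ := (bool_finset_inf_eq_false _ _).1 hinf
        simp only [he, decide_eq_false_iff_not, not_not] at hei
        subst hei
        simp [hx] at hi
  have hkey : ∀ x : Fin m → Bool, (φ x = false ↔ ∃ i ∈ I, x i = false) := by
    intro x
    constructor
    · intro hx
      set S := Finset.univ.filter (fun j => x j = false) with hSdef
      have hSne : S.Nonempty := by
        by_contra hne
        rw [Finset.not_nonempty_iff_eq_empty] at hne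
        have hxtop : x = ⊤ := by
          funext j
          by_contra hj
          have : j ∈ S := by
            simp only [hSdef, Finset.mem_filter, Finset.mem_univ, true_and]
            cases hxj : x j
            · rfl
            · exact absurd hxj (by simpa using hj)
          rw [hne] at this
          exact absurd this (Finset.notMem_empty j)
        -- φ ⊤ = true since φ is surjective and monotone
        obtain ⟨y, hy⟩ := hs true
        have : φ x = true := by
          rw [hxtop]
          exact le_antisymm (by simp) (hy ▸ hmono le_top)
        simp [this] at hx
      have := map_nonempty_inf φ hmeet S hSne e
      rw [← hdecomp x] at this
      rw [this, bool_finset_inf_eq_false] at hx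
      obtain ⟨i, hiS, hei⟩ := hx
      refine ⟨i, by simp only [hI, Finset.mem_filter, Finset.mem_univ, true_and]; simpa using hei, ?_⟩
      simpa [hSdef] using hiS
    · rintro ⟨i, hiI, hxi⟩
      have hle : x ≤ e i := by
        intro j
        by_cases hj : j = i
        · subst hj; simp [hxi]
        · simp [he, hj]
      have hphi : φ (e i) = false := by simpa [hI] using hiI
      have h2 := hmono hle
      rw [hphi] at h2
      exact le_antisymm h2 (by simp)
  refine ⟨I, ?_, ?_⟩
  · -- φ ⊥ = false since surjective and monotone
    obtain ⟨y, hy⟩ := hs false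
    have hbot : φ ⊥ = false := le_antisymm (hy ▸ hmono bot_le) (by simp)
    obtain ⟨i, hiI, _⟩ := (hkey ⊥).1 hbot
    exact ⟨i, hiI⟩
  · intro x
    cases hx : φ x with
    | false =>
      obtain ⟨i, hiI, hxi⟩ := (hkey x).1 hx
      symm
      rw [bool_finset_inf_eq_false]
      exact ⟨i, hiI, hxi⟩
    | true =>
      cases hinf : I.inf x with
      | true => rfl
      | false =>
        obtain ⟨i, hiI, hxi⟩ := (bool_finset_inf_eq_false _ _).1 hinf
        have := (hkey x).2 ⟨i, hiI, hxi⟩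
        simp [this] at hx
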